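/- Let n ≥ 1, ν ∈ ℤ, let g ∈ SU(n,n) have n×n blocks g = (A B; C D), and let U ∈ M(n,ℂ). Put X₀ = (0 U; U* 0) and Y₀ = (0 iU; −iU* 0) (both lie in su(n,n)). Let h : SU(n,n) → ℂ be h(x) = (det D_x)^{−ν}, where D_x denotes the lower-right n×n block of x (which is invertible for x ∈ SU(n,n)). Then the functions t ↦ h(g·exp(tX₀)) and t ↦ h(g·exp(tY₀)) (exp = matrix exponential; g·exp(tX₀), g·exp(tY₀) ∈ SU(n,n) for all real t) are differentiable at t = 0 and: (i) ½·(d/dt)|_{t=0} h(g·exp(tX₀)) − (i/2)·(d/dt)|_{t=0} h(g·exp(tY₀)) = −ν·(det D)^{−ν}·tr(D^{−1}CU); (ii) ½·(d/dt)|_{t=0} h(g·exp(tX₀)) + (i/2)·(d/dt)|_{t=0} h(g·exp(tY₀)) = 0. -/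

import Mathlib

open MeasureTheory Complex Matrix Filter
open scoped ENNReal Real ComplexOrder

noncomputable section

/-- The space of `n × n` complex matrices. -/
abbrev Mat (n : ℕ) := Matrix (Fin n) (Fin n) ℂ

/-- The space of `2n × 2n` complex matrices, in `n × n` block form. -/
abbrev BMat (n : ℕ) := Matrix (Fin n ⊕ Fin n) (Fin n ⊕ Fin n) ℂ

/-- The matrix `J = diag(I_n, −I_n)`. -/
def Jmat (n : ℕ) : BMat n := Matrix.fromBlocks 1 0 0 (-1)

/-- The group `SU(n,n)`. -/
def SUnn (n : ℕ) : Set (BMat n) := {g | g.det = 1 ∧ gᴴ * Jmat n * g = Jmat n}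

/-- The Lie algebra `su(n,n)`. -/
def sunn (n : ℕ) : Set (BMat n) := {X | Xᴴ * Jmat n + Jmat n * X = 0 ∧ X.trace = 0}

/-- The matrix exponential `exp A = Σ Aᵏ/k!`. -/
def matExp (n : ℕ) (A : BMat n) : BMat n := ∑' k : ℕ, ((Nat.factorial k : ℂ))⁻¹ • A ^ k

theorem matExp_eq (n : ℕ) (A : BMat n) : matExp n A = NormedSpace.exp A := by
  rw [NormedSpace.exp_eq_tsum ℂ]; rfl

theorem hasDerivAt_mul_matExp_entry (n : ℕ) (g X : BMat n) (p q : Fin n ⊕ Fin n) :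
    HasDerivAt (fun z : ℂ => (g * matExp n (z • X)) p q) ((g * X) p q) 0 := by
  letI : SeminormedRing (BMat n) := Matrix.linftyOpSemiNormedRing
  letI : NormedRing (BMat n) := Matrix.linftyOpNormedRing
  letI : NormedAlgebra ℂ (BMat n) := Matrix.linftyOpNormedAlgebra
  have h1 : HasDerivAt (fun z : ℂ => NormedSpace.exp (z • X))
      (NormedSpace.exp ((0 : ℂ) • X) * X) 0 := hasDerivAt_exp_smul_const X (0 : ℂ)
  rw [zero_smul, NormedSpace.exp_zero, one_mul] at h1
  have h2 : HasDerivAt (fun z : ℂ => g * NormedSpace.exp (z • X)) (g * X) 0 := h1.const_mul g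
  let ℓ : BMat n →ₗ[ℂ] ℂ :=
    { toFun := fun M => M p q, map_add' := fun _ _ => rfl, map_smul' := fun _ _ => rfl }
  have h3 := ℓ.toContinuousLinearMap.hasFDerivAt.comp_hasDerivAt 0 h2
  have : (fun z : ℂ => (g * matExp n (z • X)) p q)
      = fun z : ℂ => ℓ.toContinuousLinearMap (g * NormedSpace.exp (z • X)) := by
    funext z
    simp [matExp_eq, ℓ, LinearMap.coe_toContinuousLinearMap']
    rfl
  rw [this]
  exact h3

def detCM (n : ℕ) : ContinuousMultilinearMap ℂ (fun _ : Fin n => (Fin n → ℂ)) ℂ :=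
  MultilinearMap.mkContinuous
    ((Matrix.detRowAlternating : (Fin n → ℂ) [⋀^Fin n]→ₗ[ℂ] ℂ) : MultilinearMap ℂ (fun _ : Fin n => (Fin n → ℂ)) ℂ)
    (n.factorial) (by
      intro m
      have hdet : (Matrix.detRowAlternating (Matrix.of m) : ℂ) = (Matrix.of m).det := rfl
      show ‖(Matrix.of m).det‖ ≤ _
      rw [Matrix.det_apply]
      refine (norm_sum_le _ _).trans ?_
      have hb : ∀ σ : Equiv.Perm (Fin n),
          ‖Equiv.Perm.sign σ • ∏ i, Matrix.of m (σ i) i‖ ≤ ∏ i, ‖m i‖ := by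
        intro σ
        have h1 : ‖Equiv.Perm.sign σ • ∏ i, Matrix.of m (σ i) i‖ = ‖∏ i, m (σ i) i‖ := by
          rcases Int.units_eq_one_or (Equiv.Perm.sign σ) with h | h <;> simp [h]
        rw [h1, norm_prod]
        calc ∏ i, ‖m (σ i) i‖ ≤ ∏ i, ‖m (σ i)‖ := by
              refine Finset.prod_le_prod (fun i _ => norm_nonneg _) (fun i _ => ?_)
              exact norm_le_pi_norm (m (σ i)) i
          _ = ∏ i, ‖m i‖ := Equiv.prod_comp σ (fun i => ‖m i‖)
      calc ∑ σ : Equiv.Perm (Fin n), ‖Equiv.Perm.sign σ • ∏ i, Matrix.of m (σ i) i‖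
          ≤ ∑ _σ : Equiv.Perm (Fin n), ∏ i, ‖m i‖ := Finset.sum_le_sum (fun σ _ => hb σ)
        _ = (n.factorial : ℝ) * ∏ i, ‖m i‖ := by
            rw [Finset.sum_const, nsmul_eq_mul]
            congr 1
            simp [Fintype.card_perm])

theorem detCM_apply (n : ℕ) (m : Fin n → Fin n → ℂ) : detCM n m = (Matrix.of m).det := rfl

theorem hasDerivAt_det (n : ℕ) {M : ℂ → Mat n} {M' : Mat n} {z₀ : ℂ}
    (h : ∀ i j, HasDerivAt (fun z => M z i j) (M' i j) z₀) :
    HasDerivAt (fun z => (M z).det) (∑ i, ((M z₀).updateRow i (M' i)).det) z₀ := by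
  have hrow : ∀ i, HasFDerivAt (fun z : ℂ => (M z i : Fin n → ℂ))
      (ContinuousLinearMap.smulRight (1 : ℂ →L[ℂ] ℂ) (M' i)) z₀ :=
    fun i => (hasDerivAt_pi.2 (h i)).hasFDerivAt
  have hf := HasFDerivAt.multilinear_comp (detCM n) hrow
  have hd := hf.hasDerivAt
  have hfun : (fun z : ℂ => detCM n (fun i => M z i)) = fun z => (M z).det := by
    funext z; rw [detCM_apply]; rfl
  rw [hfun] at hd
  refine hd.congr_deriv ?_
  symm
  rw [ContinuousLinearMap.sum_apply]
  refine Finset.sum_congr rfl (fun i _ => ?_)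
  simp only [ContinuousLinearMap.comp_apply, ContinuousLinearMap.smulRight_apply,
    ContinuousLinearMap.one_apply, one_smul]
  rw [ContinuousMultilinearMap.toContinuousLinearMap_apply, detCM_apply]
  rfl

theorem sum_det_updateRow (n : ℕ) (D H : Mat n) (hD : D.det ≠ 0) :
    ∑ i, (D.updateRow i (H i)).det = D.det * (D⁻¹ * H).trace := by
  have key : ∀ i : Fin n, (D.updateRow i (H i)).det = ∑ j, H i j * D.adjugate j i := by
    intro i
    have h1 : (D.updateRow i (H i)).det = Matrix.cramer Dᵀ (H i) i := by
      rw [Matrix.cramer_apply, Matrix.updateCol_transpose, Matrix.det_transpose]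
    have h2 : (H i : Fin n → ℂ) = ∑ j, H i j • (Pi.single j 1 : Fin n → ℂ) := by
      ext k
      simp [Pi.single_apply]
    rw [h1]
    conv_lhs => rw [h2]
    rw [map_sum, Finset.sum_apply]
    refine Finset.sum_congr rfl (fun j _ => ?_)
    rw [LinearMap.map_smul, Pi.smul_apply, smul_eq_mul]
    rfl
  calc ∑ i, (D.updateRow i (H i)).det = ∑ i, ∑ j, H i j * D.adjugate j i :=
        Finset.sum_congr rfl (fun i _ => key i)
    _ = (H * D.adjugate).trace := by
        rw [Matrix.trace]
        simp [Matrix.mul_apply, Matrix.diag]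
    _ = (D.adjugate * H).trace := Matrix.trace_mul_comm _ _
    _ = D.det * (D⁻¹ * H).trace := by
        have hadj : D.adjugate = D.det • D⁻¹ := by
          rw [Matrix.inv_def, Ring.inverse_eq_inv', smul_smul, mul_inv_cancel₀ hD, one_smul]
        rw [hadj, Matrix.smul_mul, Matrix.trace_smul, smul_eq_mul]

theorem det_toBlocks₂₂_ne_zero (n : ℕ) (g : BMat n) (hg : g ∈ SUnn n) :
    (g.toBlocks₂₂).det ≠ 0 := by
  obtain ⟨-, hg2⟩ := hg
  set A := g.toBlocks₁₁
  set B := g.toBlocks₁₂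
  set C := g.toBlocks₂₁
  set D := g.toBlocks₂₂
  have hgeq : g = Matrix.fromBlocks A B C D := (Matrix.fromBlocks_toBlocks g).symm
  rw [hgeq] at hg2
  rw [Jmat] at hg2
  simp only [Matrix.fromBlocks_conjTranspose, Matrix.fromBlocks_multiply] at hg2
  have h22 := congrArg Matrix.toBlocks₂₂ hg2
  simp only [Matrix.toBlocks_fromBlocks₂₂] at h22
  have hDD : Dᴴ * D = 1 + Bᴴ * B := by
    have := h22
    simp only [Matrix.mul_one, Matrix.mul_zero, Matrix.mul_neg, Matrix.zero_mul, Matrix.one_mul,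
      Matrix.neg_mul, zero_add, add_zero] at this
    linear_combination (norm := abel) -this
  have hpos : (Dᴴ * D).PosDef := by
    rw [hDD]
    exact Matrix.PosDef.add_posSemidef Matrix.PosDef.one
      (Matrix.posSemidef_conjTranspose_mul_self B)
  have hdet : (0 : ℂ) < (Dᴴ * D).det := hpos.det_pos
  intro h
  rw [Matrix.det_mul, Matrix.det_conjTranspose, h, mul_zero] at hdet
  exact lt_irrefl _ hdet

theorem key (n : ℕ) (ν : ℤ) (g X : BMat n) (hg : g ∈ SUnn n) :
    HasDerivAt (fun z : ℂ => ((g * matExp n (z • X)).toBlocks₂₂).det ^ (-ν))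
      (-(ν : ℂ) * (g.toBlocks₂₂).det ^ (-ν)
        * ((g.toBlocks₂₂)⁻¹ * (g * X).toBlocks₂₂).trace) 0 := by
  set D := g.toBlocks₂₂ with hD
  set H := (g * X).toBlocks₂₂ with hH
  have hDne : D.det ≠ 0 := det_toBlocks₂₂_ne_zero n g hg
  set M : ℂ → Mat n := fun z => (g * matExp n (z • X)).toBlocks₂₂ with hMdef
  have hexp0 : matExp n ((0 : ℂ) • X) = 1 := by
    rw [zero_smul, matExp_eq, NormedSpace.exp_zero]
  have hM0 : M 0 = D := by
    show (g * matExp n ((0 : ℂ) • X)).toBlocks₂₂ = D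
    rw [hexp0, mul_one]
  have hentry : ∀ i j, HasDerivAt (fun z => M z i j) (H i j) 0 := fun i j =>
    hasDerivAt_mul_matExp_entry n g X (Sum.inr i) (Sum.inr j)
  have hdet : HasDerivAt (fun z => (M z).det) (∑ i, ((M 0).updateRow i (H i)).det) 0 :=
    hasDerivAt_det n hentry
  rw [hM0, sum_det_updateRow n D H hDne] at hdet
  have hzpow : HasDerivAt (fun w : ℂ => w ^ (-ν)) (-(ν : ℂ) * D.det ^ (-ν - 1))
      ((fun z => (M z).det) 0) := by
    have := hasDerivAt_zpow (-ν) D.det (Or.inl hDne)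
    simp only [Int.cast_neg] at this
    simpa [hM0] using this
  have hcomp := hzpow.comp 0 hdet
  have heq : -(ν : ℂ) * D.det ^ (-ν - 1) * (D.det * (D⁻¹ * H).trace)
      = -(ν : ℂ) * D.det ^ (-ν) * (D⁻¹ * H).trace := by
    have h1 : D.det ^ (-ν - 1) * D.det = D.det ^ (-ν) := by
      rw [zpow_sub_one₀ hDne, mul_assoc, inv_mul_cancel₀ hDne, mul_one]
    calc -(ν : ℂ) * D.det ^ (-ν - 1) * (D.det * (D⁻¹ * H).trace)
        = -(ν : ℂ) * (D.det ^ (-ν - 1) * D.det) * (D⁻¹ * H).trace := by ring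
      _ = -(ν : ℂ) * D.det ^ (-ν) * (D⁻¹ * H).trace := by rw [h1]
  rw [heq] at hcomp
  exact hcomp


/-- Lemma 2.2: for `g = (A B; C D) ∈ SU(n,n)`, `U ∈ M(n,ℂ)`,
`X₀ = (0 U; U* 0)`, `Y₀ = (0 iU; −iU* 0)` (both in `su(n,n)`), and
`h(x) = (det D_x)^{−ν}`, the curves `t ↦ h(g exp(tX₀))` and `t ↦ h(g exp(tY₀))`
are differentiable at `t = 0`, with
`L⁺(U)h(g) = ½ d/dt h(g exp(tX₀)) − (i/2) d/dt h(g exp(tY₀)) = −ν (det D)^{−ν} tr(D⁻¹CU)` and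
`L⁻(Ū)h(g) = ½ d/dt h(g exp(tX₀)) + (i/2) d/dt h(g exp(tY₀)) = 0`. -/
theorem statement5 (n : ℕ) (hn : 1 ≤ n) (ν : ℤ) (g : BMat n) (hg : g ∈ SUnn n) (U : Mat n) :
    Matrix.fromBlocks 0 U Uᴴ 0 ∈ sunn n ∧
    Matrix.fromBlocks 0 (Complex.I • U) (-(Complex.I • Uᴴ)) 0 ∈ sunn n ∧
    ∃ dX dY : ℂ,
      HasDerivAt (fun t : ℝ =>
          ((g * matExp n ((t : ℂ) • Matrix.fromBlocks 0 U Uᴴ 0)).toBlocks₂₂).det ^ (-ν))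
        dX 0 ∧
      HasDerivAt (fun t : ℝ =>
          ((g * matExp n ((t : ℂ) •
            Matrix.fromBlocks 0 (Complex.I • U) (-(Complex.I • Uᴴ)) 0)).toBlocks₂₂).det ^ (-ν))
        dY 0 ∧
      (1 / 2 : ℂ) * dX - (Complex.I / 2) * dY
        = -(ν : ℂ) * (g.toBlocks₂₂).det ^ (-ν)
            * Matrix.trace ((g.toBlocks₂₂)⁻¹ * g.toBlocks₂₁ * U) ∧
      (1 / 2 : ℂ) * dX + (Complex.I / 2) * dY = 0 := by
  set X₀ : BMat n := Matrix.fromBlocks 0 U Uᴴ 0 with hX₀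
  set Y₀ : BMat n := Matrix.fromBlocks 0 (Complex.I • U) (-(Complex.I • Uᴴ)) 0 with hY₀
  refine ⟨?_, ?_, ?_⟩
  · constructor
    · simp [sunn, Jmat, hX₀, Matrix.fromBlocks_conjTranspose, Matrix.fromBlocks_multiply,
        Matrix.fromBlocks_add]
    · simp [sunn, hX₀, Matrix.trace, Matrix.diag, Fintype.sum_sum_type]
  · constructor
    · simp [sunn, Jmat, hY₀, Matrix.fromBlocks_conjTranspose, Matrix.fromBlocks_multiply,
        Matrix.fromBlocks_add]
    · simp [sunn, hY₀, Matrix.trace, Matrix.diag, Fintype.sum_sum_type]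
  · set D := g.toBlocks₂₂ with hD
    set C := g.toBlocks₂₁ with hC
    have hCU : (g * X₀).toBlocks₂₂ = C * U := by
      conv_lhs => rw [← Matrix.fromBlocks_toBlocks g]
      simp [hX₀, Matrix.fromBlocks_multiply, hC]
    have hCUY : (g * Y₀).toBlocks₂₂ = Complex.I • (C * U) := by
      conv_lhs => rw [← Matrix.fromBlocks_toBlocks g]
      simp [hY₀, Matrix.fromBlocks_multiply, Matrix.mul_smul, hC]
    have hkX := key n ν g X₀ hg
    have hkY := key n ν g Y₀ hg
    rw [show (0 : ℂ) = ((0 : ℝ) : ℂ) from by norm_num] at hkX hkY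
    refine ⟨_, _, hkX.comp_ofReal, hkY.comp_ofReal, ?_, ?_⟩
    · rw [hCU, hCUY]
      rw [Matrix.mul_smul, Matrix.trace_smul, smul_eq_mul, ← mul_assoc (D⁻¹)]
      have hI := Complex.I_mul_I
      ring_nf
      rw [Complex.I_sq]
      ring
    · rw [hCU, hCUY]
      rw [Matrix.mul_smul, Matrix.trace_smul, smul_eq_mul]
      have hI := Complex.I_mul_I
      ring_nf
      rw [Complex.I_sq]
      ring


end
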